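/- Let s ∈ (0,1), ρ ∈ (0,∞], and M : ℝⁿ × B_ρ → ℝ^{n×n} be Lipschitz continuous with Lipschitz constant C_M, satisfying β|ξ| ≤ |M(x−y, y)ξ| ≤ α|ξ| for all x ∈ ℝⁿ, y ∈ B_ρ, ξ ∈ ℝⁿ. Define K(x,z) = c_{n,s} χ_{[0,ρ)}(|x−z|)/|M(z, x−z)(x−z)|^{n+2s} with c_{n,s} ≤ C₀ s(1−s). Then for every x ∈ ℝⁿ, ∫_{B_1} |y| · |K(x, x+y) − K(x, x−y)| dy ≤ C⋆ C_M s, where C⋆ depends only on n, α, β and C₀. -/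

import Mathlib

open MeasureTheory
open scoped ENNReal

section helpers

private lemma rpow_sub_rpow_le' (p a b m : ℝ) (hp : 1 ≤ p) (ha : 0 < a) (hab : a ≤ b)
    (hbm : b ≤ m) : b ^ p - a ^ p ≤ p * m ^ (p - 1) * (b - a) := by
  have hm : 0 < m := lt_of_lt_of_le ha (hab.trans hbm)
  have key := norm_image_sub_le_of_norm_deriv_le_segment' (f := fun x : ℝ => x ^ p)
    (f' := fun x : ℝ => p * x ^ (p - 1)) (a := a) (b := b) (C := p * m ^ (p - 1))
    (fun x hx => ((Real.hasDerivAt_rpow_const (Or.inr hp)).hasDerivWithinAt))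
    (fun x hx => by
      have hx0 : 0 ≤ x := le_trans ha.le hx.1
      have hxm : x ≤ m := le_trans hx.2.le hbm
      rw [Real.norm_eq_abs, abs_of_nonneg (by positivity)]
      have : x ^ (p - 1) ≤ m ^ (p - 1) := Real.rpow_le_rpow hx0 hxm (by linarith)
      exact mul_le_mul_of_nonneg_left this (by linarith)) b (Set.right_mem_Icc.2 hab)
  rw [Real.norm_eq_abs] at key
  calc b ^ p - a ^ p ≤ |b ^ p - a ^ p| := le_abs_self _
    _ ≤ p * m ^ (p - 1) * (b - a) := key

private lemma abs_rpow_sub_rpow_le' (p a b m : ℝ) (hp : 1 ≤ p) (ha : 0 < a) (hb : 0 < b)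
    (ham : a ≤ m) (hbm : b ≤ m) : |b ^ p - a ^ p| ≤ p * m ^ (p - 1) * |b - a| := by
  rcases le_total a b with h | h
  · rw [abs_of_nonneg (sub_nonneg.2 (Real.rpow_le_rpow ha.le h (by linarith))),
      abs_of_nonneg (sub_nonneg.2 h)]
    exact rpow_sub_rpow_le' p a b m hp ha h hbm
  · rw [abs_of_nonpos (sub_nonpos.2 (Real.rpow_le_rpow hb.le h (by linarith))),
      abs_of_nonpos (sub_nonpos.2 h), neg_sub, neg_sub]
    exact rpow_sub_rpow_le' p b a m hp hb h ham

private lemma half_rpow_le' (s : ℝ) (hs0 : 0 < s) (hs1 : s < 1) :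
    (1/2 : ℝ) ^ (2 - 2*s) ≤ 1 - (1 - s)/3 := by
  have hu0 : 0 < 2 - 2*s := by linarith
  have hu2 : 2 - 2*s ≤ 2 := by linarith
  have hlog : (0.6931471803 : ℝ) < Real.log 2 := Real.log_two_gt_d9
  set u : ℝ := 2 - 2*s with hu
  set a : ℝ := Real.log 2 * u with hadef
  have ha : u/2 ≤ a := by
    rw [hadef]; nlinarith
  have ha0 : 0 < a := lt_of_lt_of_le (by linarith) ha
  have h1 : (1/2 : ℝ) ^ u = Real.exp (-a) := by
    rw [Real.rpow_def_of_pos (by norm_num : (0:ℝ) < 1/2)]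
    rw [one_div, Real.log_inv]
    ring_nf
    rw [hadef]
  have h2 : Real.exp (-a) ≤ (a + 1)⁻¹ := by
    rw [Real.exp_neg]
    exact inv_anti₀ (by linarith) (Real.add_one_le_exp a)
  have h3 : (a + 1)⁻¹ ≤ 1 - u/6 := by
    rw [inv_le_iff_one_le_mul₀ (by linarith)]
    nlinarith
  have : 1 - (1 - s)/3 = 1 - u/6 := by rw [hu]; ring
  rw [this, h1]
  linarith

private lemma lintegral_rpow_ball' (n : ℕ) (hn : 1 ≤ n) (s : ℝ) (hs0 : 0 < s) (hs1 : s < 1) :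
    ∫⁻ y in Metric.ball (0 : EuclideanSpace ℝ (Fin n)) 1,
      ENNReal.ofReal (‖y‖ ^ (2 - (n:ℝ) - 2*s)) ≤
    ENNReal.ofReal ((2:ℝ)^n * (3/(1-s))) *
      volume (Metric.ball (0 : EuclideanSpace ℝ (Fin n)) 1) := by
  set E := EuclideanSpace ℝ (Fin n)
  haveI : Nontrivial E := by
    have : 0 < Module.finrank ℝ E := by
      rw [finrank_euclideanSpace_fin]; omega
    exact Module.nontrivial_of_finrank_pos this
  set t : ℝ := 2 - (n:ℝ) - 2*s with ht
  set q : ℝ := (1/2 : ℝ) ^ (2 - 2*s) with hq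
  have hq0 : 0 ≤ q := Real.rpow_nonneg (by norm_num) _
  have hq1 : q ≤ 1 - (1-s)/3 := half_rpow_le' s hs0 hs1
  have hq1' : q < 1 := by linarith
  set V : ℝ≥0∞ := volume (Metric.ball (0 : E) 1) with hV
  set S : ℕ → Set E := fun k => Metric.ball 0 ((1/2:ℝ)^k) \ Metric.ball 0 ((1/2:ℝ)^(k+1)) with hS
  set g : E → ℝ≥0∞ := fun y => ENNReal.ofReal (‖y‖ ^ t) with hg
  have hcover : Metric.ball (0 : E) 1 ⊆ {0} ∪ ⋃ k, S k := by
    intro y hy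
    rcases eq_or_ne y 0 with h0 | h0
    · exact Or.inl h0
    · have hy0 : 0 < ‖y‖ := norm_pos_iff.2 h0
      have hy1 : ‖y‖ < 1 := by simpa [dist_zero_right] using hy
      have hex : ∃ m, (1/2:ℝ)^m < ‖y‖ := exists_pow_lt_of_lt_one hy0 (by norm_num)
      have hP : ∃ m, (1/2:ℝ)^m ≤ ‖y‖ := ⟨hex.choose, hex.choose_spec.le⟩
      have hm1 : Nat.find hP ≠ 0 := by
        intro h
        have hsp := Nat.find_spec hP
        rw [h] at hsp; simp at hsp; linarith
      set k := Nat.find hP - 1 with hkdef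
      have hkk : k + 1 = Nat.find hP := by omega
      have hms : (1/2:ℝ)^(k+1) ≤ ‖y‖ := by rw [hkk]; exact Nat.find_spec hP
      have hk : ¬ ((1/2:ℝ)^k ≤ ‖y‖) := Nat.find_min hP (by omega)
      refine Or.inr (Set.mem_iUnion.2 ⟨k, ?_⟩)
      constructor
      · simpa [dist_zero_right] using lt_of_not_ge hk
      · simpa [dist_zero_right] using not_lt.2 hms
  have hshell : ∀ k : ℕ, ∀ y ∈ S k, ‖y‖ ^ t ≤ (2:ℝ)^n * ((1/2:ℝ)^k) ^ t := by
    intro k y hy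
    obtain ⟨hy1, hy2⟩ := hy
    have hyub : ‖y‖ < (1/2:ℝ)^k := by simpa [dist_zero_right] using hy1
    have hylb : (1/2:ℝ)^(k+1) ≤ ‖y‖ := by
      have := hy2; simp only [Metric.mem_ball, dist_zero_right, not_lt] at this; exact this
    have hrk : (0:ℝ) < (1/2:ℝ)^k := by positivity
    have h2n : (1:ℝ) ≤ (2:ℝ)^n := one_le_pow₀ (by norm_num)
    rcases le_or_gt t 0 with htn | htp
    · have h1 : ‖y‖ ^ t ≤ ((1/2:ℝ)^(k+1)) ^ t :=
        Real.rpow_le_rpow_of_nonpos (by positivity) hylb htn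
      have h2 : ((1/2:ℝ)^(k+1)) ^ t = ((1/2:ℝ)^k) ^ t * ((1/2:ℝ)) ^ t := by
        rw [pow_succ, Real.mul_rpow (by positivity) (by norm_num)]
      have h3 : ((1/2:ℝ)) ^ t ≤ (2:ℝ)^n := by
        have e1 : ((1/2:ℝ)) ^ t = (2:ℝ) ^ (-t) := by
          rw [one_div, Real.inv_rpow (by norm_num), ← Real.rpow_neg (by norm_num)]
        have e2 : (2:ℝ) ^ (-t) ≤ (2:ℝ) ^ ((n:ℝ)) := by
          apply Real.rpow_le_rpow_of_exponent_le one_le_two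
          rw [ht]; linarith
        rw [e1, ← Real.rpow_natCast 2 n]
        exact e2
      calc ‖y‖ ^ t ≤ ((1/2:ℝ)^k) ^ t * ((1/2:ℝ)) ^ t := by rw [← h2]; exact h1
        _ ≤ ((1/2:ℝ)^k) ^ t * (2:ℝ)^n :=
            mul_le_mul_of_nonneg_left h3 (Real.rpow_nonneg hrk.le _)
        _ = (2:ℝ)^n * ((1/2:ℝ)^k) ^ t := by ring
    · have h1 : ‖y‖ ^ t ≤ ((1/2:ℝ)^k) ^ t :=
        Real.rpow_le_rpow (norm_nonneg y) hyub.le htp.le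
      calc ‖y‖ ^ t ≤ ((1/2:ℝ)^k) ^ t := h1
        _ ≤ (2:ℝ)^n * ((1/2:ℝ)^k) ^ t := le_mul_of_one_le_left (Real.rpow_nonneg hrk.le _) h2n
  have hSk : ∀ k : ℕ, ∫⁻ y in S k, g y ∂volume ≤
      ENNReal.ofReal ((2:ℝ)^n) * (ENNReal.ofReal q)^k * V := by
    intro k
    have hrk : (0:ℝ) < (1/2:ℝ)^k := by positivity
    have step1 : ∫⁻ y in S k, g y ∂volume ≤
        ∫⁻ _ in S k, ENNReal.ofReal ((2:ℝ)^n * ((1/2:ℝ)^k) ^ t) ∂volume :=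
      setLIntegral_mono measurable_const fun y hy => ENNReal.ofReal_le_ofReal (hshell k y hy)
    have step2 : volume (S k) ≤ ENNReal.ofReal (((1/2:ℝ)^k) ^ n) * V := by
      calc volume (S k) ≤ volume (Metric.ball (0:E) ((1/2:ℝ)^k)) :=
            measure_mono Set.diff_subset
        _ = ENNReal.ofReal (((1/2:ℝ)^k) ^ Module.finrank ℝ E) * V := by
            rw [Measure.addHaar_ball volume 0 hrk.le]
        _ = ENNReal.ofReal (((1/2:ℝ)^k) ^ n) * V := by rw [finrank_euclideanSpace_fin]
    calc ∫⁻ y in S k, g y ∂volume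
        ≤ ENNReal.ofReal ((2:ℝ)^n * ((1/2:ℝ)^k) ^ t) * volume (S k) := by
          rw [← setLIntegral_const]; exact step1
      _ ≤ ENNReal.ofReal ((2:ℝ)^n * ((1/2:ℝ)^k) ^ t) *
            (ENNReal.ofReal (((1/2:ℝ)^k) ^ n) * V) := mul_le_mul_right step2 _
      _ = ENNReal.ofReal ((2:ℝ)^n) * (ENNReal.ofReal q)^k * V := by
          have hkey : ((1/2:ℝ)^k) ^ t * ((1/2:ℝ)^k) ^ (n:ℕ) = q ^ k := by
            rw [← Real.rpow_natCast ((1/2:ℝ)^k) n, ← Real.rpow_add hrk,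
              ← Real.rpow_natCast (1/2:ℝ) k, ← Real.rpow_mul (by norm_num), hq,
              ← Real.rpow_natCast ((1/2:ℝ)^((2:ℝ)-2*s)) k, ← Real.rpow_mul (by norm_num)]
            congr 1
            rw [ht]; ring
          rw [ENNReal.ofReal_mul (show (0:ℝ) ≤ (2:ℝ)^n by positivity),
            ← ENNReal.ofReal_pow hq0, ← hkey,
            ENNReal.ofReal_mul (Real.rpow_nonneg hrk.le _)]
          ring
  calc ∫⁻ y in Metric.ball (0:E) 1, g y ∂volume
      ≤ ∫⁻ y in ({0} ∪ ⋃ k, S k : Set E), g y ∂volume := lintegral_mono_set hcover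
    _ ≤ (∫⁻ y in ({0} : Set E), g y ∂volume) + ∫⁻ y in (⋃ k, S k), g y ∂volume :=
        lintegral_union_le _ _ _
    _ ≤ 0 + ∑' k, ∫⁻ y in S k, g y ∂volume := by
        gcongr
        · rw [setLIntegral_measure_zero _ _ (measure_singleton 0)]
        · exact lintegral_iUnion_le _ _
    _ ≤ ∑' k, ENNReal.ofReal ((2:ℝ)^n) * (ENNReal.ofReal q)^k * V := by
        rw [zero_add]; exact ENNReal.tsum_le_tsum hSk
    _ = ENNReal.ofReal ((2:ℝ)^n) * (∑' k, (ENNReal.ofReal q)^k) * V := by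
        rw [ENNReal.tsum_mul_right, ENNReal.tsum_mul_left]
    _ = ENNReal.ofReal ((2:ℝ)^n) * (1 - ENNReal.ofReal q)⁻¹ * V := by
        rw [ENNReal.tsum_geometric]
    _ ≤ ENNReal.ofReal ((2:ℝ)^n) * ENNReal.ofReal (3/(1-s)) * V := by
        gcongr
        have h1 : (1:ℝ≥0∞) - ENNReal.ofReal q = ENNReal.ofReal (1 - q) := by
          rw [← ENNReal.ofReal_one, ← ENNReal.ofReal_sub _ hq0]
        rw [h1, ← ENNReal.ofReal_inv_of_pos (by linarith)]
        apply ENNReal.ofReal_le_ofReal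
        rw [div_eq_mul_inv, ← inv_inv ((3:ℝ) * (1-s)⁻¹)]
        apply inv_anti₀
        · have h1s : (0:ℝ) < 1 - s := by linarith
          positivity
        · rw [mul_inv, inv_inv]
          calc (3:ℝ)⁻¹ * (1-s) = (1-s)/3 := by ring
            _ ≤ 1 - q := by linarith
    _ = ENNReal.ofReal ((2:ℝ)^n * (3/(1-s))) * V := by
        rw [ENNReal.ofReal_mul (show (0:ℝ) ≤ (2:ℝ)^n by positivity)]

end helpers

set_option maxHeartbeats 2000000 in
/-- Almost-symmetry of kernels induced by a Lipschitz nondegenerate matrix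
field: for `K(x,z) = c χ_{[0,ρ)}(|x−z|)/|M(z,x−z)(x−z)|^{n+2s}` with
`c ≤ C₀ s(1−s)`, one has `∫_{B_1} |y| |K(x,x+y) − K(x,x−y)| dy ≤ C⋆ C_M s`,
with `C⋆` depending only on `n, α, β, C₀`. -/
theorem stmt16 (n : ℕ) (hn : 1 ≤ n) (α β C₀ : ℝ)
    (hβ : 0 < β) (hαβ : β ≤ α) (hC₀ : 0 < C₀) :
    ∃ Cstar : ℝ, 0 < Cstar ∧
      ∀ (CM : ℝ), 0 ≤ CM →
      ∀ (s : ℝ), s ∈ Set.Ioo (0 : ℝ) 1 →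
      ∀ (ρ : ℝ≥0∞), 0 < ρ →
      ∀ (M : EuclideanSpace ℝ (Fin n) → EuclideanSpace ℝ (Fin n) →
          (EuclideanSpace ℝ (Fin n) →L[ℝ] EuclideanSpace ℝ (Fin n)))
        (c : ℝ), 0 ≤ c → c ≤ C₀ * s * (1 - s) →
        (∀ x y : EuclideanSpace ℝ (Fin n), ENNReal.ofReal ‖y‖ < ρ →
          ∀ ξ, β * ‖ξ‖ ≤ ‖M (x - y) y ξ‖ ∧ ‖M (x - y) y ξ‖ ≤ α * ‖ξ‖) →
        (∀ p q : EuclideanSpace ℝ (Fin n) × EuclideanSpace ℝ (Fin n),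
          ‖M p.1 p.2 - M q.1 q.2‖ ≤ CM * ‖p - q‖) →
      ∀ x : EuclideanSpace ℝ (Fin n),
        (∫ y in Metric.ball (0 : EuclideanSpace ℝ (Fin n)) 1,
          ‖y‖ * |c * (if ENNReal.ofReal ‖y‖ < ρ then (1:ℝ) else 0) /
                    ‖M (x + y) (-y) (-y)‖ ^ ((n : ℝ) + 2 * s)
                - c * (if ENNReal.ofReal ‖y‖ < ρ then (1:ℝ) else 0) /
                    ‖M (x - y) y y‖ ^ ((n : ℝ) + 2 * s)|)
          ≤ Cstar * CM * s := by
  have hα : 0 < α := lt_of_lt_of_le hβ hαβ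
  set κ : ℝ := (max 1 α) ^ ((n:ℝ)+2) * (max 1 β⁻¹) ^ (2*(n:ℝ)+4) with hκdef
  have hmax1 : (0:ℝ) < max 1 α := lt_of_lt_of_le one_pos (le_max_left 1 α)
  have hmax2 : (0:ℝ) < max 1 β⁻¹ := lt_of_lt_of_le one_pos (le_max_left 1 β⁻¹)
  have hκ0 : 0 < κ := mul_pos (Real.rpow_pos_of_pos hmax1 _) (Real.rpow_pos_of_pos hmax2 _)
  set Vr : ℝ := (volume (Metric.ball (0 : EuclideanSpace ℝ (Fin n)) 1)).toReal with hVrdef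
  have hVr0 : 0 ≤ Vr := ENNReal.toReal_nonneg
  have hn1 : (1:ℝ) ≤ (n:ℝ) := by exact_mod_cast hn
  set Cb : ℝ := 6*C₀*((n:ℝ)+2)*κ*(2:ℝ)^n*Vr with hCbdef
  have hCb0 : 0 ≤ Cb := by
    refine mul_nonneg (mul_nonneg (mul_nonneg (by positivity) hκ0.le) (by positivity)) hVr0
  refine ⟨Cb + 1, by linarith, ?_⟩
  intro CM hCM s hs ρ hρ M c hc hcC h1 h2 x
  obtain ⟨hs0, hs1⟩ := hs
  have h1s : (0:ℝ) < 1 - s := by linarith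
  set p : ℝ := (n:ℝ) + 2*s with hpdef
  have hp1 : 1 ≤ p := by rw [hpdef]; linarith
  have hp0 : 0 < p := by linarith
  have hple : p ≤ (n:ℝ)+2 := by rw [hpdef]; linarith
  set D : ℝ := 2*c*CM*((n:ℝ)+2)*κ with hDdef
  have hD0 : 0 ≤ D := by
    rw [hDdef]
    exact mul_nonneg (mul_nonneg (mul_nonneg (mul_nonneg (by norm_num) hc) hCM)
      (by linarith)) hκ0.le
  set F : EuclideanSpace ℝ (Fin n) → ℝ := fun y =>
    ‖y‖ * |c * (if ENNReal.ofReal ‖y‖ < ρ then (1:ℝ) else 0) /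
              ‖M (x + y) (-y) (-y)‖ ^ p
          - c * (if ENNReal.ofReal ‖y‖ < ρ then (1:ℝ) else 0) /
              ‖M (x - y) y y‖ ^ p| with hFdef
  -- pointwise bound
  have hpoint : ∀ y ∈ Metric.ball (0 : EuclideanSpace ℝ (Fin n)) 1,
      F y ≤ D * ‖y‖ ^ (2 - (n:ℝ) - 2*s) := by
    intro y _
    have h2p : 2 - (n:ℝ) - 2*s = 2 - p := by rw [hpdef]; ring
    have hrhs0 : 0 ≤ D * ‖y‖ ^ (2 - (n:ℝ) - 2*s) :=
      mul_nonneg hD0 (Real.rpow_nonneg (norm_nonneg _) _)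
    rcases eq_or_ne y 0 with rfl | hy0
    · have : F 0 = 0 := by rw [hFdef]; simp
      rw [this]; exact hrhs0
    by_cases hχ : ENNReal.ofReal ‖y‖ < ρ
    swap
    · have : F y = 0 := by rw [hFdef]; simp only [if_neg hχ]; simp
      rw [this]; exact hrhs0
    have hr0 : (0:ℝ) < ‖y‖ := norm_pos_iff.2 hy0
    set r : ℝ := ‖y‖ with hrdef
    set a : ℝ := ‖M (x + y) (-y) (-y)‖ with hadef
    set b : ℝ := ‖M (x - y) y y‖ with hbdef
    have hbnd1 := h1 x (-y) (by rwa [norm_neg]) (-y)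
    rw [sub_neg_eq_add, norm_neg] at hbnd1
    obtain ⟨halb, haub⟩ := hbnd1
    have hbnd2 := h1 x y hχ y
    obtain ⟨hblb, hbub⟩ := hbnd2
    have ha0 : 0 < a := lt_of_lt_of_le (by positivity) halb
    have hb0 : 0 < b := lt_of_lt_of_le (by positivity) hblb
    have hap : 0 < a ^ p := Real.rpow_pos_of_pos ha0 _
    have hbp : 0 < b ^ p := Real.rpow_pos_of_pos hb0 _
    -- |a - b| ≤ 2 CM r²
    have hab : |a - b| ≤ 2*CM*(r*r) := by
      have e1 : M (x+y) (-y) (-y) = -(M (x+y) (-y) y) := map_neg _ y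
      have e2 : a = ‖M (x+y) (-y) y‖ := by rw [hadef, e1, norm_neg]
      have hlip := h2 (x+y, -y) (x-y, y)
      have hnorm : ‖((x+y, -y) - (x-y, y) :
          EuclideanSpace ℝ (Fin n) × EuclideanSpace ℝ (Fin n))‖ ≤ 2*r := by
        rw [Prod.norm_def]
        apply max_le
        · have : (x+y) - (x-y) = y + y := by abel
          simp only [Prod.fst_sub, this]
          calc ‖y + y‖ ≤ ‖y‖ + ‖y‖ := norm_add_le _ _
            _ = 2*r := by rw [hrdef]; ring
        · have : (-y) - y = -(y + y) := by abel
          simp only [Prod.snd_sub, this, norm_neg]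
          calc ‖y + y‖ ≤ ‖y‖ + ‖y‖ := norm_add_le _ _
            _ = 2*r := by rw [hrdef]; ring
      calc |a - b| = |‖M (x+y) (-y) y‖ - ‖M (x-y) y y‖| := by rw [e2, hbdef]
        _ ≤ ‖M (x+y) (-y) y - M (x-y) y y‖ := abs_norm_sub_norm_le _ _
        _ = ‖(M (x+y) (-y) - M (x-y) y) y‖ := by rw [ContinuousLinearMap.sub_apply]
        _ ≤ ‖M (x+y) (-y) - M (x-y) y‖ * ‖y‖ := ContinuousLinearMap.le_opNorm _ _
        _ ≤ (CM * (2*r)) * r := by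
            apply mul_le_mul (hlip.trans (mul_le_mul_of_nonneg_left hnorm hCM)) le_rfl
              (norm_nonneg _) (by positivity)
        _ = 2*CM*(r*r) := by ring
    -- main chain
    have hFy : F y = r * |c / a ^ p - c / b ^ p| := by
      rw [hFdef]
      simp only [← hrdef, ← hadef, ← hbdef, if_pos hχ, mul_one]
    have heq : c / a ^ p - c / b ^ p = c * (b ^ p - a ^ p) / (a ^ p * b ^ p) := by
      field_simp
    have habs : |c / a ^ p - c / b ^ p| = c * |b ^ p - a ^ p| / (a ^ p * b ^ p) := by
      rw [heq, abs_div, abs_mul, abs_of_nonneg hc, abs_of_pos (mul_pos hap hbp)]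
    have hnum : |b ^ p - a ^ p| ≤ p * (α*r) ^ (p-1) * (2*CM*(r*r)) := by
      have := abs_rpow_sub_rpow_le' p a b (α*r) hp1 ha0 hb0 haub hbub
      refine this.trans ?_
      apply mul_le_mul_of_nonneg_left _ (by positivity)
      rwa [abs_sub_comm]
    have hden : (β*r) ^ (2*p) ≤ a ^ p * b ^ p := by
      have hbr : (0:ℝ) < β*r := by positivity
      rw [two_mul, Real.rpow_add hbr]
      exact mul_le_mul (Real.rpow_le_rpow hbr.le halb hp0.le)
        (Real.rpow_le_rpow hbr.le hblb hp0.le)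
        (Real.rpow_nonneg hbr.le _) (Real.rpow_nonneg ha0.le _)
    have hfrac : c * |b ^ p - a ^ p| / (a ^ p * b ^ p) ≤
        c * (p * (α*r) ^ (p-1) * (2*CM*(r*r))) / ((β*r) ^ (2*p)) := by
      apply div_le_div₀ (by positivity)
        (mul_le_mul_of_nonneg_left hnum hc)
        (Real.rpow_pos_of_pos (by positivity) _) hden
    -- algebraic identity
    have hαr : (α*r) ^ (p-1) = α ^ (p-1) * r ^ (p-1) := Real.mul_rpow hα.le hr0.le
    have hβr : (β*r) ^ (2*p) = β ^ (2*p) * r ^ (2*p) := Real.mul_rpow hβ.le hr0.le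
    have hrpow : r * (r ^ (p-1) * (r*r)) / r ^ (2*p) = r ^ (2-p) := by
      have e3 : r * (r ^ (p-1) * (r*r)) = r ^ (p+2) := by
        rw [show p+2 = (p-1) + 3 by ring, Real.rpow_add hr0,
          show (3:ℝ) = ((3:ℕ):ℝ) by norm_num, Real.rpow_natCast]
        ring
      rw [e3, ← Real.rpow_sub hr0]
      congr 1
      ring
    have halg : r * (c * (p * (α*r) ^ (p-1) * (2*CM*(r*r))) / ((β*r) ^ (2*p))) =
        (2*c*CM) * (p * (α ^ (p-1) * (β ^ (2*p))⁻¹)) * (r * (r ^ (p-1) * (r*r)) / r ^ (2*p)) := by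
      rw [hαr, hβr]
      have hb2p : (0:ℝ) < β ^ (2*p) := Real.rpow_pos_of_pos hβ _
      have hr2p : (0:ℝ) < r ^ (2*p) := Real.rpow_pos_of_pos hr0 _
      field_simp
    -- scalar bound
    have hαbound : α ^ (p-1) ≤ (max 1 α) ^ ((n:ℝ)+2) := by
      calc α ^ (p-1) ≤ (max 1 α) ^ (p-1) :=
            Real.rpow_le_rpow hα.le (le_max_right 1 α) (by linarith)
        _ ≤ (max 1 α) ^ ((n:ℝ)+2) :=
            Real.rpow_le_rpow_of_exponent_le (le_max_left 1 α) (by linarith)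
    have hβbound : (β ^ (2*p))⁻¹ ≤ (max 1 β⁻¹) ^ (2*(n:ℝ)+4) := by
      rw [← Real.inv_rpow hβ.le]
      calc (β⁻¹) ^ (2*p) ≤ (max 1 β⁻¹) ^ (2*p) :=
            Real.rpow_le_rpow (by positivity) (le_max_right 1 β⁻¹) (by linarith)
        _ ≤ (max 1 β⁻¹) ^ (2*(n:ℝ)+4) :=
            Real.rpow_le_rpow_of_exponent_le (le_max_left 1 β⁻¹) (by linarith)
    have hscal : (2*c*CM) * (p * (α ^ (p-1) * (β ^ (2*p))⁻¹)) ≤ D := by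
      have hfac : p * (α ^ (p-1) * (β ^ (2*p))⁻¹) ≤ ((n:ℝ)+2) * κ := by
        rw [hκdef]
        apply mul_le_mul hple
          (mul_le_mul hαbound hβbound (by positivity) (Real.rpow_nonneg hmax1.le _))
          (mul_nonneg (Real.rpow_nonneg hα.le _) (by positivity)) (by linarith)
      calc (2*c*CM) * (p * (α ^ (p-1) * (β ^ (2*p))⁻¹)) ≤ (2*c*CM) * (((n:ℝ)+2) * κ) :=
            mul_le_mul_of_nonneg_left hfac
              (mul_nonneg (mul_nonneg (by norm_num) hc) hCM)
        _ = D := by rw [hDdef]; ring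
    -- combine
    rw [hFy, habs, h2p]
    calc r * (c * |b ^ p - a ^ p| / (a ^ p * b ^ p))
        ≤ r * (c * (p * (α*r) ^ (p-1) * (2*CM*(r*r))) / ((β*r) ^ (2*p))) :=
          mul_le_mul_of_nonneg_left hfrac hr0.le
      _ = (2*c*CM) * (p * (α ^ (p-1) * (β ^ (2*p))⁻¹)) * (r ^ (2-p)) := by
          rw [halg, hrpow]
      _ ≤ D * r ^ (2-p) :=
          mul_le_mul_of_nonneg_right hscal (Real.rpow_nonneg hr0.le _)
  -- measurability
  have hMcont : Continuous (fun pq : EuclideanSpace ℝ (Fin n) × EuclideanSpace ℝ (Fin n) =>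
      M pq.1 pq.2) := by
    have : LipschitzWith (Real.toNNReal CM)
        (fun pq : EuclideanSpace ℝ (Fin n) × EuclideanSpace ℝ (Fin n) => M pq.1 pq.2) := by
      apply LipschitzWith.of_dist_le_mul
      intro pq qq
      rw [dist_eq_norm, dist_eq_norm, Real.coe_toNNReal CM hCM]
      exact h2 pq qq
    exact this.continuous
  have hG1 : Continuous fun y : EuclideanSpace ℝ (Fin n) => ‖M (x+y) (-y) (-y)‖ :=
    ((hMcont.comp ((continuous_const.add continuous_id).prodMk continuous_neg)).clm_apply
      continuous_neg).norm
  have hG2 : Continuous fun y : EuclideanSpace ℝ (Fin n) => ‖M (x-y) y y‖ :=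
    ((hMcont.comp ((continuous_const.sub continuous_id).prodMk continuous_id)).clm_apply
      continuous_id).norm
  have hχm : Measurable fun y : EuclideanSpace ℝ (Fin n) =>
      (if ENNReal.ofReal ‖y‖ < ρ then (1:ℝ) else 0) := by
    apply Measurable.ite _ measurable_const measurable_const
    exact measurableSet_lt (ENNReal.measurable_ofReal.comp measurable_norm) measurable_const
  have hFm : Measurable F := by
    rw [hFdef]
    apply Measurable.mul measurable_norm
    apply Measurable.abs
    exact ((measurable_const.mul hχm).div ((hG1.measurable).pow_const p)).sub
      ((measurable_const.mul hχm).div ((hG2.measurable).pow_const p))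
  have hnonneg : 0 ≤ᵐ[volume.restrict (Metric.ball (0 : EuclideanSpace ℝ (Fin n)) 1)] F :=
    Filter.Eventually.of_forall fun y => by rw [hFdef]; positivity
  -- pass to lintegral
  rw [MeasureTheory.integral_eq_lintegral_of_nonneg_ae hnonneg hFm.aestronglyMeasurable]
  apply ENNReal.toReal_le_of_le_ofReal
    (mul_nonneg (mul_nonneg (by linarith) hCM) hs0.le)
  have hballfin : volume (Metric.ball (0 : EuclideanSpace ℝ (Fin n)) 1) ≠ ∞ :=
    measure_ball_lt_top.ne
  have hQ0 : (0:ℝ) ≤ (2:ℝ)^n * (3/(1-s)) := by positivity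
  calc ∫⁻ y in Metric.ball (0 : EuclideanSpace ℝ (Fin n)) 1, ENNReal.ofReal (F y)
      ≤ ∫⁻ y in Metric.ball (0 : EuclideanSpace ℝ (Fin n)) 1,
          ENNReal.ofReal (D * ‖y‖ ^ (2 - (n:ℝ) - 2*s)) :=
        setLIntegral_mono
          (((measurable_norm.pow_const _).const_mul D).ennreal_ofReal)
          (fun y hy => ENNReal.ofReal_le_ofReal (hpoint y hy))
    _ = ENNReal.ofReal D * ∫⁻ y in Metric.ball (0 : EuclideanSpace ℝ (Fin n)) 1,
          ENNReal.ofReal (‖y‖ ^ (2 - (n:ℝ) - 2*s)) := by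
        simp_rw [ENNReal.ofReal_mul hD0]
        exact lintegral_const_mul' _ _ ENNReal.ofReal_ne_top
    _ ≤ ENNReal.ofReal D * (ENNReal.ofReal ((2:ℝ)^n * (3/(1-s))) *
          volume (Metric.ball (0 : EuclideanSpace ℝ (Fin n)) 1)) :=
        mul_le_mul_right (lintegral_rpow_ball' n hn s hs0 hs1) _
    _ = ENNReal.ofReal (D * ((2:ℝ)^n * (3/(1-s)) * Vr)) := by
        rw [hVrdef, ← ENNReal.ofReal_toReal hballfin]
        rw [← ENNReal.ofReal_mul hQ0, ← ENNReal.ofReal_mul hD0]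
        rw [ENNReal.ofReal_toReal hballfin]
    _ ≤ ENNReal.ofReal ((Cb + 1) * CM * s) := by
        apply ENNReal.ofReal_le_ofReal
        have hQ0' : (0:ℝ) ≤ (2:ℝ)^n * (3/(1-s)) * Vr := mul_nonneg hQ0 hVr0
        have hDle : D ≤ 2*(C₀*s*(1-s))*CM*((n:ℝ)+2)*κ := by
          have hfac : (0:ℝ) ≤ 2*CM*((n:ℝ)+2)*κ :=
            mul_nonneg (mul_nonneg (mul_nonneg (by norm_num) hCM) (by linarith)) hκ0.le
          calc D = c * (2*CM*((n:ℝ)+2)*κ) := by rw [hDdef]; ring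
            _ ≤ (C₀*s*(1-s)) * (2*CM*((n:ℝ)+2)*κ) := mul_le_mul_of_nonneg_right hcC hfac
            _ = 2*(C₀*s*(1-s))*CM*((n:ℝ)+2)*κ := by ring
        calc D * ((2:ℝ)^n * (3/(1-s)) * Vr)
            ≤ (2*(C₀*s*(1-s))*CM*((n:ℝ)+2)*κ) * ((2:ℝ)^n * (3/(1-s)) * Vr) :=
              mul_le_mul_of_nonneg_right hDle hQ0'
          _ = Cb * CM * s := by
              rw [hCbdef]
              field_simp
              ring
          _ ≤ (Cb + 1) * CM * s := by nlinarith [mul_nonneg hCM hs0.le]
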